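/- Let S = k[x_0, …, x_n, y_0, …, y_n] and let I be the ideal generated by the n binomials h_i = x_{i−1}·y_{i−1} − x_i·y_i for i = 1, …, n. Then I is a prime ideal of S. -/

import Mathlib

open MvPolynomial

namespace CremonaAux

noncomputable section

open Finset

variable (k : Type*) [Field k] (n : ℕ)

/-- The generating set of the ideal. -/
def Igen : Set (MvPolynomial (Fin (n + 1) ⊕ Fin (n + 1)) k) :=
  {p : MvPolynomial (Fin (n + 1) ⊕ Fin (n + 1)) k |
    ∃ i : Fin n,
      p = X (Sum.inl i.castSucc) * X (Sum.inr i.castSucc)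
          - X (Sum.inl i.succ) * X (Sum.inr i.succ)}

/-- Images of the variables: `x_i ↦ X_i`, `y_i ↦ t ∏_{j ≠ i} X_j`. -/
def g : Fin (n + 1) ⊕ Fin (n + 1) → MvPolynomial (Option (Fin (n + 1))) k
  | .inl i => X (some i)
  | .inr i => X none * ∏ j ∈ Finset.univ.erase i, X (some j)

/-- The algebra map to a domain whose kernel is our ideal. -/
def φ : MvPolynomial (Fin (n + 1) ⊕ Fin (n + 1)) k →ₐ[k]
    MvPolynomial (Option (Fin (n + 1))) k :=
  aeval (g k n)

variable {k n}

/-- The induced map on exponents. -/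
def Fexp (d : Fin (n + 1) ⊕ Fin (n + 1) →₀ ℕ) : Option (Fin (n + 1)) →₀ ℕ :=
  Finsupp.equivFunOnFinite.symm fun o =>
    match o with
    | none => ∑ i, d (.inr i)
    | some j => d (.inl j) + ∑ i ∈ Finset.univ.erase j, d (.inr i)

lemma Fexp_none (d : Fin (n + 1) ⊕ Fin (n + 1) →₀ ℕ) :
    Fexp d none = ∑ i, d (.inr i) := rfl

lemma Fexp_some (d : Fin (n + 1) ⊕ Fin (n + 1) →₀ ℕ) (j : Fin (n + 1)) :
    Fexp d (some j) = d (.inl j) + ∑ i ∈ Finset.univ.erase j, d (.inr i) := rfl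

lemma Fexp_add (a b : Fin (n + 1) ⊕ Fin (n + 1) →₀ ℕ) :
    Fexp (a + b) = Fexp a + Fexp b := by
  ext o
  cases o <;>
    simp [Fexp_none, Fexp_some, Finsupp.add_apply, Finset.sum_add_distrib] <;> ring

lemma Fexp_zero : Fexp (0 : Fin (n + 1) ⊕ Fin (n + 1) →₀ ℕ) = 0 := by
  ext o; cases o <;> simp [Fexp_none, Fexp_some]

lemma Fexp_smul (m : ℕ) (d : Fin (n + 1) ⊕ Fin (n + 1) →₀ ℕ) :
    Fexp (m • d) = m • Fexp d := by
  ext o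
  cases o <;>
    simp [Fexp_none, Fexp_some, Finsupp.smul_apply, Finset.mul_sum, mul_add]

lemma prod_monomial {τ' τ : Type*} (s : Finset τ') (u : τ' → (τ →₀ ℕ)) :
    ∏ j ∈ s, (monomial (u j) (1 : k)) = monomial (∑ j ∈ s, u j) 1 := by
  classical
  induction s using Finset.cons_induction with
  | empty => simp
  | cons a s ha ih =>
      rw [Finset.prod_cons, Finset.sum_cons, ih, monomial_mul, one_mul]

lemma g_eq_monomial (s : Fin (n + 1) ⊕ Fin (n + 1)) :
    g k n s = monomial (Fexp (Finsupp.single s 1)) (1 : k) := by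
  cases s with
  | inl i =>
      have h : Fexp (Finsupp.single (Sum.inl i : Fin (n+1) ⊕ Fin (n+1)) 1)
          = Finsupp.single (some i) 1 := by
        ext o
        cases o <;>
          simp [Fexp_none, Fexp_some, Finsupp.single_apply]
      rw [g, h]
      rfl
  | inr i =>
      have h : Fexp (Finsupp.single (Sum.inr i : Fin (n+1) ⊕ Fin (n+1)) 1)
          = Finsupp.single none 1
            + ∑ j ∈ Finset.univ.erase i, Finsupp.single (some j) 1 := by
        ext o
        cases o with
        | none =>
            simp [Fexp_none, Finsupp.single_apply, Finsupp.add_apply,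
              Finsupp.finset_sum_apply]
        | some j =>
            simp only [Fexp_some, Finsupp.single_apply, Finsupp.add_apply,
              Finsupp.finset_sum_apply]
            by_cases hji : j = i
            · simp [hji, Finset.sum_ite_eq', Finset.mem_erase, Finsupp.single_apply]
            · simp [hji, Ne.symm hji, Finset.sum_ite_eq', Finset.mem_erase,
                Finsupp.single_apply]
      rw [g, h]
      rw [show (X none : MvPolynomial (Option (Fin (n+1))) k)
            = monomial (Finsupp.single none 1) 1 from rfl]
      rw [show (fun j => (X (some j) : MvPolynomial (Option (Fin (n+1))) k))
            = fun j => monomial (Finsupp.single (some j) 1) 1 from rfl]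
      rw [prod_monomial, monomial_mul, one_mul]

lemma phi_monomial (d : Fin (n + 1) ⊕ Fin (n + 1) →₀ ℕ) :
    φ k n (monomial d 1) = monomial (Fexp d) 1 := by
  induction d using Finsupp.induction with
  | zero => simp [Fexp_zero]
  | single_add a b f ha hb ih =>
      have h1 : (monomial (Finsupp.single a b + f) (1 : k))
          = monomial (Finsupp.single a b) 1 * monomial f 1 := by
        rw [monomial_mul, one_mul]
      rw [h1, map_mul, ih, ← X_pow_eq_monomial, map_pow]
      have h2 : φ k n (X a) = monomial (Fexp (Finsupp.single a 1)) 1 := by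
        rw [φ, aeval_X, g_eq_monomial]
      rw [h2, monomial_pow, one_pow, ← Fexp_smul, monomial_mul, one_mul, ← Fexp_add]
      congr 2
      ext s
      simp [Finsupp.single_apply]

/-- Normal exponents: for each `j < n` not both `x_j`, `y_j` occur. -/
def IsNormal (d : Fin (n + 1) ⊕ Fin (n + 1) →₀ ℕ) : Prop :=
  ∀ j : Fin (n + 1), (j : ℕ) < n → d (.inl j) = 0 ∨ d (.inr j) = 0

lemma Fexp_injOn {d d' : Fin (n + 1) ⊕ Fin (n + 1) →₀ ℕ}
    (hd : IsNormal d) (hd' : IsNormal d') (h : Fexp d = Fexp d') : d = d' := by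
  have hnone : ∑ i, d (.inr i) = ∑ i, d' (.inr i) := by
    rw [← Fexp_none, ← Fexp_none, h]
  have hsome : ∀ j, d (.inl j) + ∑ i ∈ Finset.univ.erase j, d (.inr i)
      = d' (.inl j) + ∑ i ∈ Finset.univ.erase j, d' (.inr i) := fun j => by
    rw [← Fexp_some, ← Fexp_some, h]
  have herase : ∀ j : Fin (n + 1),
      ∑ i ∈ Finset.univ.erase j, d (.inr i) + d (.inr j) = ∑ i, d (.inr i) :=
    fun j => Finset.sum_erase_add _ _ (Finset.mem_univ j)
  have herase' : ∀ j : Fin (n + 1),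
      ∑ i ∈ Finset.univ.erase j, d' (.inr i) + d' (.inr j) = ∑ i, d' (.inr i) :=
    fun j => Finset.sum_erase_add _ _ (Finset.mem_univ j)
  have key : ∀ j : Fin (n + 1), (j : ℕ) < n →
      d (.inl j) = d' (.inl j) ∧ d (.inr j) = d' (.inr j) := by
    intro j hj
    have h1 := hsome j
    have h2 := herase j
    have h3 := herase' j
    rcases hd j hj with h4 | h4 <;> rcases hd' j hj with h5 | h5 <;> omega
  have hlast_erase : ∑ i ∈ Finset.univ.erase (Fin.last n), d (.inr i)
      = ∑ i ∈ Finset.univ.erase (Fin.last n), d' (.inr i) := by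
    refine Finset.sum_congr rfl fun i hi => ?_
    have hi' : (i : ℕ) < n := by
      have hne : i ≠ Fin.last n := (Finset.mem_erase.mp hi).1
      have := Fin.is_le i
      rcases lt_or_eq_of_le this with h | h
      · exact h
      · exact absurd (Fin.ext h) hne
    exact (key i hi').2
  have hlast_inr : d (.inr (Fin.last n)) = d' (.inr (Fin.last n)) := by
    have h2 := herase (Fin.last n)
    have h3 := herase' (Fin.last n)
    omega
  have hlast_inl : d (.inl (Fin.last n)) = d' (.inl (Fin.last n)) := by
    have h1 := hsome (Fin.last n)
    omega
  ext s
  rcases s with j | j <;>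
  · rcases lt_or_eq_of_le (Fin.is_le j) with hj | hj
    · first
        | exact (key j hj).1
        | exact (key j hj).2
    · have : j = Fin.last n := Fin.ext hj
      subst this
      first
        | exact hlast_inl
        | exact hlast_inr

lemma eq_zero_of_normal {r : MvPolynomial (Fin (n + 1) ⊕ Fin (n + 1)) k}
    (hr : ∀ d ∈ r.support, IsNormal d) (h : φ k n r = 0) : r = 0 := by
  classical
  ext d₀
  rw [coeff_zero]
  by_cases hd₀ : d₀ ∈ r.support
  · have hφ : φ k n r = ∑ d ∈ r.support, monomial (Fexp d) (coeff d r) := by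
      conv_lhs => rw [r.as_sum]
      rw [map_sum]
      refine Finset.sum_congr rfl fun d _ => ?_
      have : (monomial d (coeff d r)) = C (coeff d r) * monomial d 1 := by
        rw [C_mul_monomial, mul_one]
      rw [this, map_mul, phi_monomial]
      have hC : φ k n (C (coeff d r)) = C (coeff d r) := by
        simp [φ]
      rw [hC, C_mul_monomial, mul_one]
    have hcoeff : coeff (Fexp d₀) (φ k n r) = coeff d₀ r := by
      rw [hφ]
      rw [coeff_sum]
      rw [Finset.sum_eq_single_of_mem d₀ hd₀]
      · simp [coeff_monomial]
      · intro d hd hne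
        rw [coeff_monomial, if_neg]
        intro hFeq
        exact hne (Fexp_injOn (hr d hd) (hr d₀ hd₀) hFeq)
    rw [h, coeff_zero] at hcoeff
    exact hcoeff.symm
  · simpa using hd₀

lemma X_mul_X {σ : Type*} (a b : σ) :
    (X a : MvPolynomial σ k) * X b
      = monomial (Finsupp.single a 1 + Finsupp.single b 1) 1 := by
  rw [show (X a : MvPolynomial σ k) = monomial (Finsupp.single a 1) 1 from rfl,
    show (X b : MvPolynomial σ k) = monomial (Finsupp.single b 1) 1 from rfl,
    monomial_mul, one_mul]

/-- The basic quadratic monomial `x_j y_j`. -/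
def q (j : Fin (n + 1)) : MvPolynomial (Fin (n + 1) ⊕ Fin (n + 1)) k :=
  X (Sum.inl j) * X (Sum.inr j)

lemma q_sub_mem : ∀ (m : ℕ) (j : Fin (n + 1)), (j : ℕ) + m = n →
    q (k := k) j - q (Fin.last n) ∈ Ideal.span (Igen k n) := by
  intro m
  induction m with
  | zero =>
      intro j hj
      have : j = Fin.last n := Fin.ext (by simpa using hj)
      rw [this, sub_self]
      exact Ideal.zero_mem _
  | succ m ih =>
      intro j hj
      have hjn : (j : ℕ) < n := by omega
      set i : Fin n := ⟨(j : ℕ), hjn⟩ with hi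
      have hcs : i.castSucc = j := Fin.ext rfl
      have h1 : q (k := k) i.castSucc - q i.succ ∈ Ideal.span (Igen k n) :=
        Ideal.subset_span ⟨i, rfl⟩
      have h2 : q (k := k) i.succ - q (Fin.last n) ∈ Ideal.span (Igen k n) := by
        apply ih
        simp only [Fin.val_succ, hi]
        omega
      have h3 := Ideal.add_mem _ h1 h2
      rw [sub_add_sub_cancel, hcs] at h3
      exact h3

/-- The measure used to prove termination of reduction to normal form. -/
def μ (d : Fin (n + 1) ⊕ Fin (n + 1) →₀ ℕ) : ℕ :=
  ∑ i : Fin n, min (d (.inl i.castSucc)) (d (.inr i.castSucc))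

lemma reduce_mono : ∀ (N : ℕ) (d : Fin (n + 1) ⊕ Fin (n + 1) →₀ ℕ), μ d = N →
    ∃ d', IsNormal d' ∧
      (monomial d (1 : k) - monomial d' 1) ∈ Ideal.span (Igen k n) := by
  intro N
  induction N using Nat.strong_induction_on with
  | _ N ih =>
    intro d hd
    by_cases hnorm : IsNormal d
    · exact ⟨d, hnorm, by simp⟩
    · rw [IsNormal] at hnorm
      push_neg at hnorm
      obtain ⟨j, hjn, hx, hy⟩ := hnorm
      set u : Fin (n + 1) ⊕ Fin (n + 1) →₀ ℕ :=
        Finsupp.single (Sum.inl j) 1 + Finsupp.single (Sum.inr j) 1 with hu_def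
      set v : Fin (n + 1) ⊕ Fin (n + 1) →₀ ℕ :=
        Finsupp.single (Sum.inl (Fin.last n)) 1
          + Finsupp.single (Sum.inr (Fin.last n)) 1 with hv_def
      have hu_le : ∀ s, u s ≤ d s := by
        intro s
        rcases s with m | m <;>
          simp only [hu_def, Finsupp.add_apply, Finsupp.single_apply] <;>
          split_ifs <;> simp_all <;> omega
      set d₁ : Fin (n + 1) ⊕ Fin (n + 1) →₀ ℕ := d - u with hd₁_def
      have hd₁ : d₁ + u = d := by
        ext s
        have := hu_le s
        simp only [hd₁_def, Finsupp.add_apply, Finsupp.tsub_apply]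
        omega
      set d₂ : Fin (n + 1) ⊕ Fin (n + 1) →₀ ℕ := d₁ + v with hd₂_def
      have hd₂ : ∀ s, d₂ s = d s - u s + v s := by
        intro s
        simp [hd₂_def, hd₁_def, Finsupp.add_apply, Finsupp.tsub_apply]
      -- membership
      have hmem : monomial d (1 : k) - monomial d₂ 1 ∈ Ideal.span (Igen k n) := by
        have hq : q (k := k) j - q (Fin.last n) ∈ Ideal.span (Igen k n) :=
          q_sub_mem (n - (j : ℕ)) j (by omega)
        have hmul := Ideal.mul_mem_left _ (monomial d₁ (1 : k)) hq
        have heq : monomial d₁ (1 : k) * (q j - q (Fin.last n))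
            = monomial d (1 : k) - monomial d₂ 1 := by
          rw [mul_sub]
          congr 1
          · rw [q, X_mul_X, ← hu_def, monomial_mul, one_mul, hd₁]
          · rw [q, X_mul_X, ← hv_def, monomial_mul, one_mul, hd₂_def]
        rwa [heq] at hmul
      -- measure decreases
      have hvx : ∀ i : Fin n, v (Sum.inl i.castSucc) = 0 := by
        intro i
        have hne : (Fin.last n) ≠ i.castSucc := (Fin.castSucc_lt_last i).ne'
        simp [hv_def, Finsupp.single_apply, hne]
      have hvy : ∀ i : Fin n, v (Sum.inr i.castSucc) = 0 := by
        intro i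
        have hne : (Fin.last n) ≠ i.castSucc := (Fin.castSucc_lt_last i).ne'
        simp [hv_def, Finsupp.single_apply, hne]
      have hux : ∀ i : Fin n, u (Sum.inl i.castSucc)
          = if j = i.castSucc then 1 else 0 := by
        intro i
        simp [hu_def, Finsupp.single_apply]
      have huy : ∀ i : Fin n, u (Sum.inr i.castSucc)
          = if j = i.castSucc then 1 else 0 := by
        intro i
        simp [hu_def, Finsupp.single_apply]
      set i₀ : Fin n := ⟨(j : ℕ), hjn⟩ with hi₀
      have hi₀cs : i₀.castSucc = j := Fin.ext rfl
      have hlt : μ d₂ < μ d := by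
        apply Finset.sum_lt_sum
        · intro i _
          have e1 := hd₂ (Sum.inl i.castSucc)
          have e2 := hd₂ (Sum.inr i.castSucc)
          rw [hvx i, hux i] at e1
          rw [hvy i, huy i] at e2
          split_ifs at e1 e2 <;> omega
        · refine ⟨i₀, Finset.mem_univ _, ?_⟩
          have e1 := hd₂ (Sum.inl i₀.castSucc)
          have e2 := hd₂ (Sum.inr i₀.castSucc)
          rw [hvx i₀, hux i₀, if_pos hi₀cs.symm] at e1
          rw [hvy i₀, huy i₀, if_pos hi₀cs.symm] at e2
          rw [hi₀cs] at e1 e2 ⊢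
          omega
      obtain ⟨d', hnorm', hmem'⟩ := ih (μ d₂) (hd ▸ hlt) d₂ rfl
      refine ⟨d', hnorm', ?_⟩
      have := Ideal.add_mem _ hmem hmem'
      rwa [sub_add_sub_cancel] at this

lemma reduce (p : MvPolynomial (Fin (n + 1) ⊕ Fin (n + 1)) k) :
    ∃ r, (∀ d ∈ r.support, IsNormal d) ∧ p - r ∈ Ideal.span (Igen k n) := by
  classical
  choose red hred1 hred2 using fun d : Fin (n + 1) ⊕ Fin (n + 1) →₀ ℕ =>
    reduce_mono (k := k) (μ d) d rfl
  refine ⟨∑ d ∈ p.support, monomial (red d) (coeff d p), ?_, ?_⟩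
  · intro d hd
    have hsub := MvPolynomial.support_sum (s := p.support)
      (f := fun d => monomial (red d) (coeff d p)) hd
    obtain ⟨d₀, hd₀, hmem⟩ := Finset.mem_biUnion.mp hsub
    have : d = red d₀ := by
      have := support_monomial_subset hmem
      simpa using this
    rw [this]
    exact hred1 d₀
  · have h1 : ∑ d ∈ p.support,
        ((monomial d (coeff d p)) - monomial (red d) (coeff d p))
        ∈ Ideal.span (Igen k n) := by
      apply Ideal.sum_mem
      intro d _
      have hmul := Ideal.mul_mem_left _ (C (coeff d p)) (hred2 d)
      rwa [mul_sub, C_mul_monomial, C_mul_monomial, mul_one] at hmul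
    have h2 : p - ∑ d ∈ p.support, monomial (red d) (coeff d p)
        = ∑ d ∈ p.support,
          ((monomial d (coeff d p)) - monomial (red d) (coeff d p)) := by
      rw [Finset.sum_sub_distrib, ← p.as_sum]
    rw [h2]
    exact h1

lemma phi_q (j : Fin (n + 1)) :
    φ k n (q j) = X none * ∏ i, (X (some i) : MvPolynomial (Option (Fin (n+1))) k) := by
  rw [q, map_mul, φ, aeval_X, aeval_X]
  show (X (some j) : MvPolynomial (Option (Fin (n+1))) k)
      * (X none * ∏ i ∈ Finset.univ.erase j, X (some i)) = _
  rw [← mul_assoc, mul_comm (X (some j)) (X none), mul_assoc]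
  rw [Finset.mul_prod_erase Finset.univ
    (fun i => (X (some i) : MvPolynomial (Option (Fin (n+1))) k)) (Finset.mem_univ j)]

lemma span_le_ker :
    Ideal.span (Igen k n) ≤ RingHom.ker (φ k n).toRingHom := by
  rw [Ideal.span_le]
  rintro p ⟨i, rfl⟩
  have : (X (Sum.inl i.castSucc) : MvPolynomial (Fin (n+1) ⊕ Fin (n+1)) k)
      * X (Sum.inr i.castSucc) - X (Sum.inl i.succ) * X (Sum.inr i.succ)
      = q i.castSucc - q i.succ := rfl
  rw [this]
  show φ k n _ = 0
  rw [map_sub, phi_q, phi_q, sub_self]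

lemma span_eq_ker :
    Ideal.span (Igen k n) = RingHom.ker (φ k n).toRingHom := by
  refine le_antisymm span_le_ker fun p hp => ?_
  obtain ⟨r, hr1, hr2⟩ := reduce p
  have hpr : φ k n (p - r) = 0 := span_le_ker hr2
  have hp0 : φ k n p = 0 := hp
  have hr0 : φ k n r = 0 := by
    have : φ k n r = φ k n p - φ k n (p - r) := by rw [map_sub]; ring
    rw [this, hp0, hpr, sub_zero]
  have : r = 0 := eq_zero_of_normal hr1 hr0
  rw [this, sub_zero] at hr2
  exact hr2

end

end CremonaAux

open CremonaAux in
/-- In `S = k[x_0, …, x_n, y_0, …, y_n]`, the ideal generated by the `n`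
binomials `h_i = x_{i-1} y_{i-1} - x_i y_i` (`i = 1, …, n`) is prime.
Here the `x`-variables are indexed by `Sum.inl` and the `y`-variables by
`Sum.inr`. -/
theorem standard_cremona_graph_ideal_isPrime
    (k : Type*) [Field k] (n : ℕ) (hn : 1 ≤ n) :
    (Ideal.span {p : MvPolynomial (Fin (n + 1) ⊕ Fin (n + 1)) k |
        ∃ i : Fin n,
          p = X (Sum.inl i.castSucc) * X (Sum.inr i.castSucc)
              - X (Sum.inl i.succ) * X (Sum.inr i.succ)}).IsPrime := by
  show (Ideal.span (Igen k n)).IsPrime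
  rw [span_eq_ker]
  exact RingHom.ker_isPrime _
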